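/- arXiv:1610.07067 — 2 statements merged into one kernel-verified Lean document; each statement's English description precedes it below -/
import Mathlib

section
/- In the standing setup (see context), one has ⟨ν_P(a), w⟩ > 0, ⟨ν_P(b), −w⟩ > 0, and |⟨ν_P(a), v⟩| / ⟨ν_P(a), w⟩ ≤ ⟨a − z, w⟩ / (d/4) as well as |⟨ν_P(b), v⟩| / ⟨ν_P(b), −w⟩ ≤ ⟨b − z, −w⟩ / (d/4). -/
open MeasureTheory Set
open scoped RealInnerProductSpace ENNReal NNReal Classical

noncomputable section

abbrev E (n : ℕ) : Type := EuclideanSpace ℝ (Fin n)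

/-- The support function of a set. -/
def suppFn {n : ℕ} (K : Set (E n)) (u : E n) : ℝ :=
  sSup ((fun x => ⟪x, u⟫) '' K)

/-- `u` is an exterior unit normal of `K` at `x`. -/
def IsOuterNormalAt {n : ℕ} (K : Set (E n)) (u x : E n) : Prop :=
  ‖u‖ = 1 ∧ ∀ y ∈ K, ⟪y, u⟫ ≤ ⟪x, u⟫

/-- A choice of Gauss map (exterior unit normal) for `K`. -/
def gaussMap {n : ℕ} (K : Set (E n)) (x : E n) : E n :=
  if h : ∃ u, IsOuterNormalAt K u x then h.choose else 0

/-- The surface area measure of a compact convex set, extended to the degenerate case: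
if `K` has nonempty interior it is `S_K(ω) = ℋ^{n-1}(ν_K^{-1}(ω))`; if `K` lies in a
hyperplane orthogonal to a unit vector `v` it is `ℋ^{n-1}(K)⋅(δ_v + δ_{-v})` (which is `0`
when `dim K ≤ n-2`). -/
def surfMeasure {n : ℕ} (K : Set (E n)) : Measure (E n) :=
  if (interior K).Nonempty then
    Measure.map (gaussMap K) ((μH[(n : ℝ) - 1]).restrict (frontier K))
  else if h : ∃ v : E n, ‖v‖ = 1 ∧ ∀ x ∈ K, ∀ y ∈ K, ⟪x - y, v⟫ = 0 then
    (μH[(n : ℝ) - 1] K) • (Measure.dirac h.choose + Measure.dirac (-h.choose))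
  else 0

/-- The `L_p` surface area measure `dS_{K,p} = h_K^{1-p} dS_K`. -/
def lpSurfMeasure {n : ℕ} (p : ℝ) (K : Set (E n)) : Measure (E n) :=
  (surfMeasure K).withDensity (fun u => ENNReal.ofReal (suppFn K u ^ (1 - p)))

/-- A convex body: a compact convex set with nonempty interior. -/
def IsConvexBody {n : ℕ} (K : Set (E n)) : Prop :=
  Convex ℝ K ∧ IsCompact K ∧ (interior K).Nonempty

/-- The support of a Borel measure. -/
def msupport {n : ℕ} (μ : Measure (E n)) : Set (E n) :=
  {x | ∀ U : Set (E n), IsOpen U → x ∈ U → 0 < μ U}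

/-- The unit sphere `S^{n-1}` in `ℝⁿ`. -/
def unitSphere (n : ℕ) : Set (E n) := Metric.sphere 0 1

/-- The spherical cap `Ω(v,t) = {u ∈ S^{n-1} : ⟨u,v⟩ > t}`. -/
def hemi {n : ℕ} (v : E n) (t : ℝ) : Set (E n) :=
  {u | u ∈ unitSphere n ∧ t < ⟪u, v⟫}



/-- The standing setup of Section 3 of the paper. -/
def Setup (p δ : ℝ) (P : Set (E 2)) (d : ℝ) (y z v w a b νa νb : E 2) : Prop :=
  Convex ℝ P ∧ IsCompact P ∧ (0:E 2) ∈ interior P ∧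
  lpSurfMeasure p P Set.univ < ENNReal.ofReal (1/δ) ∧
  d = Metric.diam P ∧
  y ∈ P ∧ z ∈ P ∧ ‖z - y‖ = d ∧ ‖y‖ ≤ ‖z‖ ∧
  v = d⁻¹ • (z - y) ∧ ‖w‖ = 1 ∧ ⟪v, w⟫ = 0 ∧
  a ∈ frontier P ∧ b ∈ frontier P ∧ 0 < ⟪a - b, w⟫ ∧
  ⟪a, v⟫ = d/4 ∧ ⟪b, v⟫ = d/4 ∧
  IsOuterNormalAt P νa a ∧ IsOuterNormalAt P νb b

lemma decomp2 {v w : E 2} (hv : ‖v‖ = 1) (hw : ‖w‖ = 1) (hvw : ⟪v, w⟫ = 0) (x : E 2) :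
    x = ⟪x, v⟫ • v + ⟪x, w⟫ • w := by
  have hvv : ⟪v, v⟫ = (1:ℝ) := by rw [real_inner_self_eq_norm_mul_norm, hv]; norm_num
  have hww : ⟪w, w⟫ = (1:ℝ) := by rw [real_inner_self_eq_norm_mul_norm, hw]; norm_num
  have hvv' : v 0 * v 0 + v 1 * v 1 = 1 := by
    have := hvv
    simp only [PiLp.inner_apply, Fin.sum_univ_two, RCLike.inner_apply, conj_trivial] at this
    linarith
  have hww' : w 0 * w 0 + w 1 * w 1 = 1 := by
    have := hww
    simp only [PiLp.inner_apply, Fin.sum_univ_two, RCLike.inner_apply, conj_trivial] at this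
    linarith
  have hvw' : v 0 * w 0 + v 1 * w 1 = 0 := by
    have := hvw
    simp only [PiLp.inner_apply, Fin.sum_univ_two, RCLike.inner_apply, conj_trivial] at this
    linarith
  have hon : Orthonormal ℝ ![v, w] := by
    rw [orthonormal_iff_ite]
    intro i j
    fin_cases i <;> fin_cases j <;> simp <;>
      first
        | exact hvv'
        | exact hww'
        | linear_combination hvw'
        | linear_combination -hvw'
        | exact Or.inl hv
        | exact Or.inl hw
        | exact hvw
        | (rw [real_inner_comm]; exact hvw)
  have hcard : Fintype.card (Fin 2) = Module.finrank ℝ (E 2) := by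
    simp [finrank_euclideanSpace_fin]
  let Bb := basisOfOrthonormalOfCardEqFinrank hon hcard
  have hBb : ⇑Bb = ![v, w] := coe_basisOfOrthonormalOfCardEqFinrank hon hcard
  have honB : Orthonormal ℝ Bb := by rwa [hBb]
  let B : OrthonormalBasis (Fin 2) ℝ (E 2) := Bb.toOrthonormalBasis honB
  have hB : ⇑B = ![v, w] := by
    rw [show ⇑B = ⇑Bb from Bb.coe_toOrthonormalBasis honB, hBb]
  have h := B.sum_repr' x
  rw [Fin.sum_univ_two, hB] at h
  simp only [Matrix.cons_val_zero, Matrix.cons_val_one, Matrix.head_cons] at h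
  rw [real_inner_comm x v, real_inner_comm x w] at h
  exact h.symm

lemma key_lemma {d : ℝ} (hd : 0 < d) {v w y z a u ν : E 2}
    (hv : ‖v‖ = 1) (hw : ‖w‖ = 1) (hvw : ⟪v, w⟫ = 0) (hν : ‖ν‖ = 1)
    (hzv : d/2 ≤ ⟪z, v⟫) (hyv : ⟪y, v⟫ ≤ 0) (hzw : ⟪z, w⟫ = ⟪y, w⟫)
    (hav : ⟪a, v⟫ = d/4)
    (huv : ⟪u, v⟫ = 0) (huw : 0 < ⟪u, w⟫) (huν : 0 ≤ ⟪u, ν⟫)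
    (hz : ⟪z, ν⟫ ≤ ⟪a, ν⟫) (hy : ⟪y, ν⟫ ≤ ⟪a, ν⟫) :
    0 < ⟪ν, w⟫ ∧ |⟪ν, v⟫| / ⟪ν, w⟫ ≤ ⟪a - z, w⟫ / (d/4) := by
  have hd4 : (0:ℝ) < d/4 := by linarith
  have hdec := decomp2 hv hw hvw ν
  set α := ⟪ν, v⟫ with hα
  set β := ⟪ν, w⟫ with hβ
  have expand : ∀ q : E 2, ⟪q, ν⟫ = α * ⟪q, v⟫ + β * ⟪q, w⟫ := by
    intro q
    conv_lhs => rw [hdec]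
    rw [inner_add_right, real_inner_smul_right, real_inner_smul_right]
  have hβ0 : 0 ≤ β := by
    have h1 := expand u
    rw [huv] at h1
    nlinarith [huν, huw]
  have I1 : α * (⟪z, v⟫ - d/4) ≤ β * (⟪a, w⟫ - ⟪z, w⟫) := by
    have h1 := expand z; have h2 := expand a
    rw [hav] at h2
    nlinarith [hz]
  have I2 : α * (⟪y, v⟫ - d/4) ≤ β * (⟪a, w⟫ - ⟪z, w⟫) := by
    have h1 := expand y; have h2 := expand a
    rw [hav] at h2; rw [hzw]
    nlinarith [hy]
  have hβpos : 0 < β := by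
    rcases hβ0.lt_or_eq with h | h
    · exact h
    · exfalso
      have hZ : d/4 ≤ ⟪z, v⟫ - d/4 := by linarith
      have hY : ⟪y, v⟫ - d/4 ≤ -(d/4) := by linarith
      have hT0 : β * (⟪a, w⟫ - ⟪z, w⟫) = 0 := by rw [← h]; ring
      have hα1 : α ≤ 0 := by
        by_contra hc
        push_neg at hc
        nlinarith [mul_pos hc (lt_of_lt_of_le hd4 hZ)]
      have hα2 : 0 ≤ α := by
        by_contra hc
        push_neg at hc
        nlinarith [mul_pos (neg_pos.mpr hc) (show (0:ℝ) < -(⟪y, v⟫ - d/4) by linarith)]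
      have hα0 : α = 0 := le_antisymm hα1 hα2
      have hν0 : ν = 0 := by rw [hdec, hα0, ← h]; simp
      rw [hν0, norm_zero] at hν
      exact one_ne_zero hν.symm
  refine ⟨hβpos, ?_⟩
  rw [div_le_div_iff₀ hβpos hd4, inner_sub_left]
  rcases abs_cases α with ⟨he, hge⟩ | ⟨he, hlt⟩ <;> rw [he]
  · linarith [I1, mul_nonneg hge (show (0:ℝ) ≤ ⟪z, v⟫ - d/2 by linarith)]
  · linarith [I2, mul_nonneg (show (0:ℝ) ≤ -α by linarith) (show (0:ℝ) ≤ -⟪y, v⟫ by linarith)]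


lemma stmt_11_aux (P : Set (E 2)) (d : ℝ) (y z v w a b νa νb : E 2)
    (hconv : Convex ℝ P) (hcomp : IsCompact P) (h0 : (0:E 2) ∈ interior P)
    (hdiam : d = Metric.diam P)
    (hyP : y ∈ P) (hzP : z ∈ P) (hzy : ‖z - y‖ = d) (hyz : ‖y‖ ≤ ‖z‖)
    (hv : v = d⁻¹ • (z - y)) (hw : ‖w‖ = 1) (hvw : ⟪v, w⟫ = 0)
    (haF : a ∈ frontier P) (hbF : b ∈ frontier P) (hab : 0 < ⟪a - b, w⟫)
    (hav : ⟪a, v⟫ = d/4) (hbv : ⟪b, v⟫ = d/4)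
    (hνa : IsOuterNormalAt P νa a) (hνb : IsOuterNormalAt P νb b) :
    0 < ⟪νa, w⟫ ∧ 0 < ⟪νb, -w⟫ ∧
    |⟪νa, v⟫| / ⟪νa, w⟫ ≤ ⟪a - z, w⟫ / (d/4) ∧
    |⟪νb, v⟫| / ⟪νb, -w⟫ ≤ ⟪b - z, -w⟫ / (d/4) := by
  have h0P : (0 : E 2) ∈ P := interior_subset h0
  have haP : a ∈ P := hcomp.isClosed.frontier_subset haF
  have hbP : b ∈ P := hcomp.isClosed.frontier_subset hbF
  -- d > 0
  obtain ⟨ε, hε, hball⟩ := Metric.mem_nhds_iff.mp (mem_interior_iff_mem_nhds.mp h0)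
  have hmem : (ε/2) • w ∈ P := by
    apply hball
    rw [Metric.mem_ball, dist_zero_right, norm_smul, hw, mul_one, Real.norm_eq_abs,
      abs_of_pos (by linarith)]
    linarith
  have hεd : ε/2 ≤ d := by
    have h1 := Metric.dist_le_diam_of_mem hcomp.isBounded hmem h0P
    rw [dist_zero_right, norm_smul, hw, mul_one, Real.norm_eq_abs,
      abs_of_pos (by linarith : (0:ℝ) < ε/2), ← hdiam] at h1
    exact h1
  have hd : 0 < d := lt_of_lt_of_le (by linarith) hεd
  have hdne : d ≠ 0 := ne_of_gt hd
  have hvnorm : ‖v‖ = 1 := by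
    rw [hv, norm_smul, hzy, Real.norm_eq_abs, abs_inv, abs_of_pos hd, inv_mul_cancel₀ hdne]
  have hnorm_sq : ‖z‖^2 - 2*⟪z, y⟫ + ‖y‖^2 = d^2 := by
    rw [← norm_sub_sq_real, hzy]
  have hzd : ‖z‖ ≤ d := by
    have h1 := Metric.dist_le_diam_of_mem hcomp.isBounded hzP h0P
    rwa [dist_zero_right, ← hdiam] at h1
  have hysq : ‖y‖^2 ≤ ‖z‖^2 := by nlinarith [norm_nonneg y, norm_nonneg z]
  have hzsq : ‖z‖^2 ≤ d^2 := by nlinarith [norm_nonneg z]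
  have hzv : d/2 ≤ ⟪z, v⟫ := by
    have e1 : ⟪z, v⟫ = (‖z‖^2 - ⟪z, y⟫) / d := by
      rw [hv, real_inner_smul_right, inner_sub_right, real_inner_self_eq_norm_sq,
        div_eq_inv_mul]
    rw [e1, le_div_iff₀ hd]
    nlinarith
  have hyv : ⟪y, v⟫ ≤ 0 := by
    have e2 : ⟪y, v⟫ = (⟪y, z⟫ - ‖y‖^2) / d := by
      rw [hv, real_inner_smul_right, inner_sub_right, real_inner_self_eq_norm_sq,
        div_eq_inv_mul]
    rw [e2, div_nonpos_iff]
    right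
    refine ⟨?_, le_of_lt hd⟩
    have hcm : ⟪y, z⟫ = ⟪z, y⟫ := real_inner_comm z y
    nlinarith [sq_nonneg ‖y‖]
  have hzw : ⟪z, w⟫ = ⟪y, w⟫ := by
    have h1 : d⁻¹ * ⟪z - y, w⟫ = 0 := by
      rw [← real_inner_smul_left, ← hv, hvw]
    have h2 : ⟪z - y, w⟫ = 0 := by
      rcases mul_eq_zero.mp h1 with h | h
      · exact absurd h (inv_ne_zero hdne)
      · exact h
    rw [inner_sub_left] at h2
    linarith
  -- apply key lemma to a
  have huv : ⟪a - b, v⟫ = 0 := by rw [inner_sub_left, hav, hbv, sub_self]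
  have huν : 0 ≤ ⟪a - b, νa⟫ := by
    rw [inner_sub_left]
    linarith [hνa.2 b hbP]
  obtain ⟨Ha1, Ha2⟩ := key_lemma hd hvnorm hw hvw hνa.1 hzv hyv hzw hav huv hab huν
    (hνa.2 z hzP) (hνa.2 y hyP)
  -- apply key lemma to b with -w
  have hw' : ‖-w‖ = 1 := by rw [norm_neg]; exact hw
  have hvw' : ⟪v, -w⟫ = 0 := by rw [inner_neg_right, hvw, neg_zero]
  have hzw' : ⟪z, -w⟫ = ⟪y, -w⟫ := by rw [inner_neg_right, inner_neg_right, hzw]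
  have huv' : ⟪b - a, v⟫ = 0 := by rw [inner_sub_left, hav, hbv, sub_self]
  have hab' : 0 < ⟪b - a, -w⟫ := by
    have e : ⟪b - a, -w⟫ = ⟪a - b, w⟫ := by
      rw [inner_neg_right, inner_sub_left, inner_sub_left]; ring
    rw [e]; exact hab
  have huν' : 0 ≤ ⟪b - a, νb⟫ := by
    rw [inner_sub_left]
    linarith [hνb.2 a haP]
  obtain ⟨Hb1, Hb2⟩ := key_lemma hd hvnorm hw' hvw' hνb.1 hzv hyv hzw' hbv huv' hab' huν'
    (hνb.2 z hzP) (hνb.2 y hyP)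
  exact ⟨Ha1, Hb1, Ha2, Hb2⟩


/-- Lemma 3.3 of the paper. -/
theorem stmt_11 (p δ : ℝ) (hp : p ∈ Set.Ioo (0:ℝ) 1) (hδ : δ ∈ Set.Ioo (0:ℝ) (1/2))
    (P : Set (E 2)) (d : ℝ) (y z v w a b νa νb : E 2)
    (hs : Setup p δ P d y z v w a b νa νb) :
    0 < ⟪νa, w⟫ ∧ 0 < ⟪νb, -w⟫ ∧
    |⟪νa, v⟫| / ⟪νa, w⟫ ≤ ⟪a - z, w⟫ / (d/4) ∧
    |⟪νb, v⟫| / ⟪νb, -w⟫ ≤ ⟪b - z, -w⟫ / (d/4) := by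
  obtain ⟨hconv, hcomp, h0, -, hdiam, hyP, hzP, hzy, hyz, hv, hw, hvw,
    haF, hbF, hab, hav, hbv, hνa, hνb⟩ := hs
  exact stmt_11_aux P d y z v w a b νa νb hconv hcomp h0 hdiam hyP hzP hzy hyz hv hw hvw
    haF hbF hab hav hbv hνa hνb

end
end

section
/- For p ∈ (0,1) and every convex body K ∈ 𝒦₀², the support of the L_p surface area measure S_{K,p} is not a pair of antipodal points {v, −v}. -/
open MeasureTheory Set
open scoped RealInnerProductSpace ENNReal NNReal Classical

noncomputable section

section AuxLemmas


lemma key_id (x0 x1 u0 u1 z0 z1 : ℝ) (h : x0*u0 + x1*u1 = 0) :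
    (z0*u0 + z1*u1) * (x0^2 + x1^2) = (x0*u1 - x1*u0) * (x0*z1 - x1*z0) := by
  linear_combination (x0*z0 + x1*z1) * h

lemma nz_of (x0 x1 u0 u1 : ℝ) (h : x0*u0 + x1*u1 = 0) (hn : u0^2 + u1^2 = 1)
    (hx : 0 < x0^2 + x1^2) : x0*u1 - x1*u0 ≠ 0 := by
  intro hc
  have h0 : u0 * (x0^2 + x1^2) = 0 := by linear_combination x0 * h - x1 * hc
  have h1 : u1 * (x0^2 + x1^2) = 0 := by linear_combination x1 * h + x0 * hc
  have e0 : u0 = 0 := by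
    rcases mul_eq_zero.1 h0 with h' | h'
    exacts [h', absurd h' hx.ne']
  have e1 : u1 = 0 := by
    rcases mul_eq_zero.1 h1 with h' | h'
    exacts [h', absurd h' hx.ne']
  rw [e0, e1] at hn; norm_num at hn

lemma pos_of_mul_nonpos_neg {c d : ℝ} (h : c * d ≤ 0) (hd : d < 0) (hc : c ≠ 0) : 0 < c := by
  rcases hc.lt_or_gt with h' | h'
  · nlinarith
  · exact h'

lemma nonpos_of_mul_nonpos {c d : ℝ} (h : c * d ≤ 0) (hc : 0 < c) : d ≤ 0 := by
  nlinarith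

lemma alg (t s β β' γ γ' : ℝ)
    (ht : 0 < t) (hs : s < 0) (hβ : β' < β) (hγ : γ' < γ)
    (ay by_ am' bm' : ℝ)
    (hy0 : t*ay + β*by_ = 0) (hyn : ay^2 + by_^2 = 1)
    (hm'0 : s*am' + γ'*bm' = 0) (hm'n : am'^2 + bm'^2 = 1)
    (h1 : t*ay + β'*by_ ≤ 0)   -- ⟨y', u_y⟩ ≤ 0
    (h2 : s*ay + γ*by_ ≤ 0)    -- ⟨m, u_y⟩ ≤ 0
    (h3 : s*ay + γ'*by_ ≤ 0)   -- ⟨m', u_y⟩ ≤ 0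
    (h6 : t*am' + β*bm' ≤ 0)   -- ⟨y, u_{m'}⟩ ≤ 0
    (h9 : s*am' + γ*bm' ≤ 0)   -- ⟨m, u_{m'}⟩ ≤ 0
    : False := by
  have hny : (0:ℝ) < t^2 + β^2 := by positivity
  have hnm : (0:ℝ) < s^2 + γ'^2 := by nlinarith [sq_nonneg γ']
  have hcy0 : t*by_ - β*ay ≠ 0 := nz_of t β ay by_ hy0 hyn hny
  have hcm0 : s*bm' - γ'*am' ≠ 0 := nz_of s γ' am' bm' hm'0 hm'n hnm
  -- cy > 0
  have k1 : (t*by_ - β*ay) * (t*β' - β*t) ≤ 0 :=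
    key_id t β ay by_ t β' hy0 ▸ mul_nonpos_of_nonpos_of_nonneg h1 hny.le
  have d1 : t*β' - β*t < 0 := by nlinarith
  have hcyp : 0 < t*by_ - β*ay := pos_of_mul_nonpos_neg k1 d1 hcy0
  -- cm' > 0
  have k9 : (s*bm' - γ'*am') * (s*γ - γ'*s) ≤ 0 :=
    key_id s γ' am' bm' s γ hm'0 ▸ mul_nonpos_of_nonpos_of_nonneg h9 hnm.le
  have d9 : s*γ - γ'*s < 0 := by nlinarith
  have hcmp : 0 < s*bm' - γ'*am' := pos_of_mul_nonpos_neg k9 d9 hcm0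
  -- e3 : t*γ' - β*s ≤ 0
  have k3 : (t*by_ - β*ay) * (t*γ' - β*s) ≤ 0 :=
    key_id t β ay by_ s γ' hy0 ▸ mul_nonpos_of_nonpos_of_nonneg h3 hny.le
  have e3 : t*γ' - β*s ≤ 0 := nonpos_of_mul_nonpos k3 hcyp
  -- e6 : s*β - γ'*t ≤ 0
  have k6 : (s*bm' - γ'*am') * (s*β - γ'*t) ≤ 0 :=
    key_id s γ' am' bm' t β hm'0 ▸ mul_nonpos_of_nonpos_of_nonneg h6 hnm.le
  have e6 : s*β - γ'*t ≤ 0 := nonpos_of_mul_nonpos k6 hcmp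
  have E1 : t*γ' = β*s := by linarith
  -- e2 : t*γ - β*s ≤ 0
  have k2 : (t*by_ - β*ay) * (t*γ - β*s) ≤ 0 :=
    key_id t β ay by_ s γ hy0 ▸ mul_nonpos_of_nonpos_of_nonneg h2 hny.le
  have e2 : t*γ - β*s ≤ 0 := nonpos_of_mul_nonpos k2 hcyp
  have hfin : 0 < t*(γ - γ') := mul_pos ht (sub_pos.mpr hγ)
  nlinarith

variable {n : ℕ} {K : Set (E n)}

lemma bdd (hK : IsCompact K) (u : E n) : BddAbove ((fun x => ⟪x, u⟫) '' K) :=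
  (hK.image (continuous_id.inner continuous_const)).bddAbove

lemma le_suppFn (hK : IsCompact K) {x : E n} (hx : x ∈ K) (u : E n) :
    ⟪x, u⟫ ≤ suppFn K u :=
  le_csSup (bdd hK u) (mem_image_of_mem _ hx)

lemma suppFn_le (hne : K.Nonempty) {u : E n} {c : ℝ} (h : ∀ x ∈ K, ⟪x, u⟫ ≤ c) :
    suppFn K u ≤ c :=
  csSup_le (hne.image _) (by rintro y ⟨x, hx, rfl⟩; exact h x hx)

lemma suppFn_attained (hK : IsCompact K) (hne : K.Nonempty) (u : E n) :
    ∃ x ∈ K, suppFn K u = ⟪x, u⟫ := by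
  obtain ⟨x, hx, hmax⟩ := hK.exists_isMaxOn (f := fun y : E n => ⟪y, u⟫) hne
    ((continuous_id.inner continuous_const).continuousOn)
  exact ⟨x, hx, le_antisymm (suppFn_le hne fun y hy => hmax hy) (le_suppFn hK hx u)⟩

lemma suppFn_nonneg (hK : IsCompact K) (h0 : (0 : E n) ∈ K) (u : E n) :
    0 ≤ suppFn K u := by
  simpa using le_suppFn hK h0 u

lemma suppFn_of_normal (hK : IsCompact K) {x u : E n} (hx : x ∈ K)
    (h : IsOuterNormalAt K u x) : suppFn K u = ⟪x, u⟫ :=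
  le_antisymm (suppFn_le ⟨x, hx⟩ h.2) (le_suppFn hK hx u)

lemma suppFn_continuous (hK : IsCompact K) (hne : K.Nonempty) :
    Continuous (suppFn K) := by
  obtain ⟨R, hR⟩ := hK.isBounded.subset_closedBall 0
  have key : ∀ u u' : E n, suppFn K u ≤ suppFn K u' + |R| * ‖u - u'‖ := by
    intro u u'
    apply suppFn_le hne
    intro x hx
    have h1 : ⟪x, u⟫ = ⟪x, u'⟫ + ⟪x, u - u'⟫ := by
      rw [← inner_add_right]
      congr 1
      abel
    have h2 : ⟪x, u - u'⟫ ≤ ‖x‖ * ‖u - u'‖ := real_inner_le_norm _ _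
    have h3 : ‖x‖ ≤ |R| := by
      have := hR hx
      simp only [Metric.mem_closedBall, dist_zero_right] at this
      exact this.trans (le_abs_self R)
    have h4 : ‖x‖ * ‖u - u'‖ ≤ |R| * ‖u - u'‖ :=
      mul_le_mul_of_nonneg_right h3 (norm_nonneg _)
    have := le_suppFn hK hx u'
    linarith
  have lip : LipschitzWith (Real.toNNReal |R|) (suppFn K) := by
    apply LipschitzWith.of_dist_le_mul
    intro u u'
    rw [Real.dist_eq, abs_sub_le_iff]
    constructor
    · have := key u u'
      have : suppFn K u - suppFn K u' ≤ |R| * ‖u - u'‖ := by linarith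
      simpa [Real.coe_toNNReal _ (abs_nonneg R), dist_eq_norm] using this
    · have := key u' u
      have h' : suppFn K u' - suppFn K u ≤ |R| * ‖u' - u‖ := by linarith
      calc suppFn K u' - suppFn K u ≤ |R| * ‖u' - u‖ := h'
        _ = Real.toNNReal |R| * dist u u' := by
            rw [Real.coe_toNNReal _ (abs_nonneg R), dist_eq_norm, norm_sub_rev]
  exact lip.continuous

lemma exists_outer_normal (hconv : Convex ℝ K) (hcl : IsClosed K)
    (hint : (interior K).Nonempty) {x : E n} (hx : x ∈ frontier K) :
    ∃ u, IsOuterNormalAt K u x := by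
  have hxint : x ∉ interior K := by
    rw [hcl.frontier_eq] at hx; exact hx.2
  obtain ⟨f, hf⟩ := geometric_hahn_banach_open_point (hconv.interior) isOpen_interior hxint
  -- realize f as inner product
  set u₀ : E n := (InnerProductSpace.toDual ℝ (E n)).symm f with hu₀
  have hfu : ∀ y, f y = ⟪u₀, y⟫ := fun y =>
    (InnerProductSpace.toDual_symm_apply (𝕜 := ℝ) (E := E n)).symm
  have hu₀ne : u₀ ≠ 0 := by
    intro h
    obtain ⟨z, hz⟩ := hint
    have := hf z hz
    rw [hfu z, hfu x, h] at this
    simp at this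
  -- every y ∈ K satisfies f y ≤ f x
  have hK' : ∀ y ∈ K, f y ≤ f x := by
    intro y hy
    by_contra hlt
    push_neg at hlt
    obtain ⟨z, hz⟩ := hint
    set d := f y - f x with hd
    have hdpos : 0 < d := by simp [hd]; linarith
    set c := |f z - f y| with hc
    set θ := d / (2 * (c + d)) with hθ
    have hcd : 0 < c + d := by positivity
    have hθ0 : 0 < θ := by positivity
    have hθ1 : θ < 1 := by
      rw [hθ, div_lt_one (by positivity)]
      nlinarith [abs_nonneg (f z - f y)]
    have hmem : θ • z + (1 - θ) • y ∈ interior K :=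
      hconv.combo_interior_closure_mem_interior hz (subset_closure hy) hθ0
        (by linarith) (by ring)
    have := hf _ hmem
    rw [map_add, f.map_smul, f.map_smul] at this
    simp only [smul_eq_mul] at this
    -- θ * f z + (1-θ) * f y < f x,  f y = f x + d
    have habs : f z - f y ≥ -c := neg_abs_le _
    have hθc : θ * (c + d) = d / 2 := by
      rw [hθ]; field_simp
    nlinarith [mul_le_mul_of_nonneg_left habs hθ0.le]
  refine ⟨‖u₀‖⁻¹ • u₀, ?_, ?_⟩
  · rw [norm_smul]
    simp [norm_inv, inv_mul_cancel₀ (norm_ne_zero_iff.2 hu₀ne)]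
  · intro y hy
    rw [real_inner_smul_right, real_inner_smul_right, real_inner_comm u₀ y,
      real_inner_comm u₀ x]
    have hfy := hK' y hy
    rw [hfu y, hfu x] at hfy
    have hpos : (0:ℝ) ≤ ‖u₀‖⁻¹ := by positivity
    exact mul_le_mul_of_nonneg_left hfy hpos

lemma gaussMap_spec {x : E n} (h : ∃ u, IsOuterNormalAt K u x) :
    IsOuterNormalAt K (gaussMap K x) x := by
  rw [gaussMap, dif_pos h]
  exact h.choose_spec

-- ======================= 2D coordinate lemmas =======================

lemma inner_coord (x y : E 2) : ⟪x, y⟫ = x 0 * y 0 + x 1 * y 1 := by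
  simp [PiLp.inner_apply, Fin.sum_univ_two, RCLike.inner_apply, conj_trivial]; ring

def wv (v : E 2) : E 2 := (WithLp.equiv 2 (Fin 2 → ℝ)).symm ![-(v 1), v 0]

lemma wv0 (v : E 2) : wv v 0 = -(v 1) := by
  simp [wv, WithLp.equiv_symm_apply, PiLp.toLp_apply]

lemma wv1 (v : E 2) : wv v 1 = v 0 := by
  simp [wv, WithLp.equiv_symm_apply, PiLp.toLp_apply]

lemma unit_coord {v : E 2} (hv : ‖v‖ = 1) : v 0 * v 0 + v 1 * v 1 = 1 := by
  have h : ⟪v, v⟫ = 1 := by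
    rw [real_inner_self_eq_norm_mul_norm, hv]; norm_num
  rwa [inner_coord] at h

lemma inner_vw {v : E 2} : ⟪v, wv v⟫ = 0 := by
  rw [inner_coord, wv0, wv1]; ring

lemma inner_wv_v {v : E 2} : ⟪wv v, v⟫ = 0 := by
  rw [inner_coord, wv0, wv1]; ring

lemma inner_ww {v : E 2} (hv : ‖v‖ = 1) : ⟪wv v, wv v⟫ = 1 := by
  rw [inner_coord, wv0, wv1]
  have := unit_coord hv
  ring_nf
  nlinarith [unit_coord hv]

lemma norm_wv {v : E 2} (hv : ‖v‖ = 1) : ‖wv v‖ = 1 := by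
  have h := inner_ww hv
  rw [real_inner_self_eq_norm_mul_norm] at h
  nlinarith [norm_nonneg (wv v)]

/-- Parseval in the orthonormal basis `(v, wv v)`. -/
lemma parseval {v : E 2} (hv : ‖v‖ = 1) (z u : E 2) :
    ⟪z, u⟫ = ⟪z, v⟫ * ⟪u, v⟫ + ⟪z, wv v⟫ * ⟪u, wv v⟫ := by
  rw [inner_coord z u, inner_coord z v, inner_coord u v, inner_coord z (wv v),
    inner_coord u (wv v), wv0, wv1]
  linear_combination (-(z 0 * u 0) - z 1 * u 1) * unit_coord hv

-- ======================= level geometry =======================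

lemma combo_eq1 {b τ t : ℝ} (h : b - τ ≠ 0) :
    (t - τ)/(b - τ) * b + (1 - (t - τ)/(b - τ)) * τ = t := by
  field_simp
  ring

lemma combo_eq2 {a τ t : ℝ} (h : τ + a ≠ 0) :
    (τ - t)/(τ + a) * (-a) + (1 - (τ - t)/(τ + a)) * τ = t := by
  field_simp
  ring

lemma exists_two_level {K : Set (E 2)} (hconv : Convex ℝ K)
    {v : E 2} (hv : ‖v‖ = 1) {z : E 2} {r : ℝ} (hr : 0 < r)
    (hball : Metric.ball z r ⊆ K) {xs : E 2} (hx : xs ∈ K) {l t : ℝ}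
    (hl0 : 0 ≤ l) (hl1 : l < 1)
    (hlev : l * ⟪xs, v⟫ + (1 - l) * ⟪z, v⟫ = t) :
    ∃ q₁ q₂, q₁ ∈ K ∧ q₂ ∈ K ∧ ⟪q₁, v⟫ = t ∧ ⟪q₂, v⟫ = t ∧
      ⟪q₂, wv v⟫ < ⟪q₁, wv v⟫ := by
  set w := wv v with hwdef
  have hw1 : ‖w‖ = 1 := norm_wv hv
  have hwv0 : ⟪w, v⟫ = (0:ℝ) := inner_wv_v
  have hww1 : ⟪w, w⟫ = (1:ℝ) := inner_ww hv
  have hzs : ∀ s : ℝ, |s| < r → z + s • w ∈ K := by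
    intro s hs
    apply hball
    simp only [Metric.mem_ball, dist_self_add_left, norm_smul, hw1, mul_one]
    rwa [Real.norm_eq_abs]
  set q : ℝ → E 2 := fun s => l • xs + (1 - l) • (z + s • w) with hq
  have hqK : ∀ s : ℝ, |s| < r → q s ∈ K := fun s hs =>
    hconv hx (hzs s hs) hl0 (by linarith) (by ring)
  have hqv : ∀ s : ℝ, ⟪q s, v⟫ = t := by
    intro s
    simp only [hq, inner_add_left, real_inner_smul_left, inner_add_left,
      real_inner_smul_left, hwv0]
    rw [← hlev]; ring
  have hqw : ∀ s : ℝ, ⟪q s, w⟫ = l * ⟪xs, w⟫ + (1 - l) * (⟪z, w⟫ + s) := by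
    intro s
    simp only [hq, inner_add_left, real_inner_smul_left, inner_add_left,
      real_inner_smul_left, hww1]
    ring
  refine ⟨q (r/2), q (-(r/2)), hqK _ (by rw [abs_of_pos (by linarith)]; linarith),
    hqK _ (by rw [abs_of_neg (by linarith)]; linarith), hqv _, hqv _, ?_⟩
  rw [hqw, hqw]
  have : 0 < (1 - l) * r := by nlinarith
  nlinarith

lemma level_points {K : Set (E 2)} (hconv : Convex ℝ K) (hcomp : IsCompact K)
    {v : E 2} (hv : ‖v‖ = 1) {z : E 2} {r : ℝ} (hr : 0 < r)
    (hball : Metric.ball z r ⊆ K) {t : ℝ}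
    (hta : -(suppFn K (-v)) < t) (htb : t < suppFn K v) :
    ∃ y y', y ∈ frontier K ∧ y' ∈ frontier K ∧ ⟪y, v⟫ = t ∧ ⟪y', v⟫ = t ∧
      ⟪y', wv v⟫ < ⟪y, wv v⟫ := by
  set w := wv v
  have hw1 : ‖w‖ = 1 := norm_wv hv
  have hKne : K.Nonempty := ⟨z, hball (Metric.mem_ball_self hr)⟩
  set b := suppFn K v
  set a := suppFn K (-v)
  set τ := ⟪z, v⟫ with hτ
  have hvv : ⟪v, v⟫ = 1 := by
    rw [real_inner_self_eq_norm_mul_norm, hv]; norm_num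
  have hzv : z + (r/2) • v ∈ K := by
    apply hball
    simp only [Metric.mem_ball, dist_self_add_left, norm_smul, hv, mul_one]
    rw [Real.norm_eq_abs, abs_of_pos (by linarith)]; linarith
  have hzv' : z + (-(r/2)) • v ∈ K := by
    apply hball
    simp only [Metric.mem_ball, dist_self_add_left, norm_smul, hv, mul_one]
    rw [Real.norm_eq_abs, abs_of_neg (by linarith)]; linarith
  have hτb : τ + r/2 ≤ b := by
    have := le_suppFn hcomp hzv v
    rwa [inner_add_left, real_inner_smul_left, hvv, mul_one] at this
  have hτa : -a ≤ τ - r/2 := by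
    have := le_suppFn hcomp hzv' (-v)
    rw [inner_add_left, real_inner_smul_left, inner_neg_right, inner_neg_right, hvv] at this
    linarith
  -- two points at level t
  obtain ⟨q₁, q₂, hq₁K, hq₂K, hq₁v, hq₂v, hqw⟩ :
      ∃ q₁ q₂, q₁ ∈ K ∧ q₂ ∈ K ∧ ⟪q₁, v⟫ = t ∧ ⟪q₂, v⟫ = t ∧
        ⟪q₂, wv v⟫ < ⟪q₁, wv v⟫ := by
    rcases le_or_gt τ t with hcase | hcase
    · -- use x_b
      obtain ⟨xb, hxbK, hxb⟩ := suppFn_attained hcomp hKne v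
      have hbτ : 0 < b - τ := by linarith
      refine exists_two_level hconv hv hr hball hxbK
        (l := (t - τ)/(b - τ)) (div_nonneg (by linarith) hbτ.le)
        ((div_lt_one hbτ).2 (by linarith)) ?_
      rw [← hxb]
      exact combo_eq1 hbτ.ne'
    · -- use x_a
      obtain ⟨xa, hxaK, hxa⟩ := suppFn_attained hcomp hKne (-v)
      have hxav : ⟪xa, v⟫ = -a := by
        rw [inner_neg_right] at hxa; linarith
      have haτ : 0 < τ + a := by linarith
      refine exists_two_level hconv hv hr hball hxaK
        (l := (τ - t)/(τ + a)) (div_nonneg (by linarith) haτ.le)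
        ((div_lt_one haτ).2 (by linarith)) ?_
      rw [hxav]
      exact combo_eq2 haτ.ne'
  -- the level slice
  set Kt := K ∩ {x : E 2 | ⟪x, v⟫ = t} with hKt
  have hKtc : IsCompact Kt :=
    hcomp.inter_right ((isClosed_singleton (x := t)).preimage
      (continuous_id.inner continuous_const))
  have hKtne : Kt.Nonempty := ⟨q₁, hq₁K, hq₁v⟩
  obtain ⟨y, hy, hymax⟩ := hKtc.exists_isMaxOn (f := fun x : E 2 => ⟪x, w⟫) hKtne
    ((continuous_id.inner continuous_const).continuousOn)
  obtain ⟨y', hy', hymin⟩ := hKtc.exists_isMinOn (f := fun x : E 2 => ⟪x, w⟫) hKtne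
    ((continuous_id.inner continuous_const).continuousOn)
  have hfr : ∀ x ∈ Kt, (∀ p ∈ Kt, ⟪p, w⟫ ≤ ⟪x, w⟫) → x ∈ frontier K := by
    intro x hxKt hmax
    rw [hcomp.isClosed.frontier_eq]
    refine ⟨hxKt.1, fun hxint => ?_⟩
    obtain ⟨δ, hδ, hδball⟩ := Metric.isOpen_iff.1 isOpen_interior x hxint
    have hmem : x + (δ/2) • w ∈ Kt := by
      constructor
      · apply interior_subset
        apply hδball
        simp only [Metric.mem_ball, dist_self_add_left, norm_smul, hw1, mul_one]
        rw [Real.norm_eq_abs, abs_of_pos (by linarith)]; linarith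
      · show ⟪x + (δ/2) • w, v⟫ = t
        rw [inner_add_left, real_inner_smul_left, inner_wv_v, mul_zero, add_zero]
        exact hxKt.2
    have := hmax _ hmem
    rw [inner_add_left, real_inner_smul_left, inner_ww hv, mul_one] at this
    linarith
  have hfr' : ∀ x ∈ Kt, (∀ p ∈ Kt, ⟪x, w⟫ ≤ ⟪p, w⟫) → x ∈ frontier K := by
    intro x hxKt hmin
    rw [hcomp.isClosed.frontier_eq]
    refine ⟨hxKt.1, fun hxint => ?_⟩
    obtain ⟨δ, hδ, hδball⟩ := Metric.isOpen_iff.1 isOpen_interior x hxint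
    have hmem : x + (-(δ/2)) • w ∈ Kt := by
      constructor
      · apply interior_subset
        apply hδball
        simp only [Metric.mem_ball, dist_self_add_left, norm_smul, hw1, mul_one]
        rw [Real.norm_eq_abs, abs_of_neg (by linarith)]; linarith
      · show ⟪x + (-(δ/2)) • w, v⟫ = t
        rw [inner_add_left, real_inner_smul_left, inner_wv_v, mul_zero, add_zero]
        exact hxKt.2
    have := hmin _ hmem
    rw [inner_add_left, real_inner_smul_left, inner_ww hv, mul_one] at this
    linarith
  refine ⟨y, y', hfr y hy fun p hp => hymax hp, hfr' y' hy' fun p hp => hymin hp,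
    hy.2, hy'.2, ?_⟩
  calc ⟪y', w⟫ ≤ ⟪q₂, w⟫ := hymin ⟨hq₂K, hq₂v⟩
    _ < ⟪q₁, w⟫ := hqw
    _ ≤ ⟪y, w⟫ := hymax ⟨hq₁K, hq₁v⟩

end AuxLemmas

set_option maxHeartbeats 1000000 in
/-- Lemma 4.1 of the paper. -/
theorem stmt_17 (p : ℝ) (hp : p ∈ Set.Ioo (0:ℝ) 1)
    (K : Set (E 2)) (hK : IsConvexBody K) (h0 : (0:E 2) ∈ K) :
    ¬ ∃ v : E 2, ‖v‖ = 1 ∧ msupport (lpSurfMeasure p K) = {v, -v} := by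
  rintro ⟨v, hv, hsupp⟩
  obtain ⟨hconv, hcomp, hint⟩ := hK
  have hKne : K.Nonempty := ⟨0, h0⟩
  have hcont : Continuous (suppFn K) := suppFn_continuous hcomp hKne
  have hfrK : frontier K ⊆ K := hcomp.isClosed.frontier_subset
  set g := gaussMap K with hg
  set f : E 2 → ℝ≥0∞ := fun u => ENNReal.ofReal (suppFn K u ^ (1 - p)) with hfdef
  have hfmeas : Measurable f := by
    apply Measurable.ennreal_ofReal
    exact hcont.measurable.pow_const _
  set ρ : Measure (E 2) := (μH[(1:ℝ)]).restrict (frontier K) with hρ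
  have h21 : ((2:ℕ):ℝ) - 1 = (1:ℝ) := by norm_num
  have hνdef : surfMeasure K = Measure.map g ρ := by
    rw [surfMeasure, if_pos hint, hρ, h21]
  have hμdef : lpSurfMeasure p K = (surfMeasure K).withDensity f := rfl
  have hvmem : v ∈ msupport (lpSurfMeasure p K) := by
    rw [hsupp]; exact Set.mem_insert _ _
  have hvmem' : -v ∈ msupport (lpSurfMeasure p K) := by
    rw [hsupp]; exact Set.mem_insert_of_mem _ rfl
  -- if the Gauss map is not a.e. measurable, the measure is zero
  by_cases hgm : AEMeasurable g ρ
  swap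
  · have hν0 : surfMeasure K = 0 := by rw [hνdef, Measure.map_of_not_aemeasurable hgm]
    have : lpSurfMeasure p K = 0 := by
      rw [hμdef, hν0]
      ext s hs
      rw [withDensity_apply _ hs]
      simp
    have h0' := hvmem Set.univ isOpen_univ (Set.mem_univ v)
    rw [this] at h0'
    simp at h0'
  -- S : the open set of directions with positive support, minus {v, -v}
  set S : Set (E 2) := {u | 0 < suppFn K u} \ {v, -v} with hS
  have hSopen : IsOpen S := by
    apply IsOpen.sdiff (isOpen_lt continuous_const hcont)
    rw [Set.insert_eq]
    exact (isClosed_singleton.union isClosed_singleton)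
  have hSmeas : MeasurableSet S := hSopen.measurableSet
  -- μ S = 0 since S avoids the support
  have hμS : lpSurfMeasure p K S = 0 := by
    apply measure_null_of_locally_null
    intro x hx
    have hxn : x ∉ msupport (lpSurfMeasure p K) := by
      rw [hsupp]; exact hx.2
    simp only [msupport, Set.mem_setOf_eq, not_forall] at hxn
    obtain ⟨U, hU, hxU, hUpos⟩ := hxn
    refine ⟨U, mem_nhdsWithin_of_mem_nhds (hU.mem_nhds hxU), ?_⟩
    simpa using hUpos
  -- hence ν S = 0
  have hfpos : ∀ u ∈ S, f u ≠ 0 := by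
    intro u hu
    have h1p : (0:ℝ) < 1 - p := by linarith [hp.2]
    have : (0:ℝ) < suppFn K u ^ (1 - p) := Real.rpow_pos_of_pos hu.1 _
    simp only [hfdef, ne_eq, ENNReal.ofReal_eq_zero, not_le]
    exact this
  have hνS : surfMeasure K S = 0 := by
    have h := (withDensity_apply_eq_zero (f := f) hfmeas).1 (by rw [← hμdef]; exact hμS)
    have heq : {x | f x ≠ 0} ∩ S = S :=
      Set.inter_eq_self_of_subset_right (fun u hu => hfpos u hu)
    rwa [heq] at h
  have hρS : ρ (g ⁻¹' S) = 0 := by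
    rw [← Measure.map_apply_of_aemeasurable hgm hSmeas, ← hνdef]
    exact hνS
  -- the set of directions with zero support function is μ-null
  have hZ : lpSurfMeasure p K {u | suppFn K u = 0} = 0 := by
    have hZm : MeasurableSet {u : E 2 | suppFn K u = 0} :=
      (isClosed_eq hcont continuous_const).measurableSet
    rw [hμdef, withDensity_apply _ hZm]
    rw [setLIntegral_congr_fun hZm (fun u hu => ?_), lintegral_zero]
    show f u = (fun _ => (0:ℝ≥0∞)) u
    have h1p : (1:ℝ) - p ≠ 0 := by intro h; linarith [hp.2, h]
    simp only [hfdef, Set.mem_setOf_eq] at hu ⊢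
    rw [hu, Real.zero_rpow h1p]
    simp
  -- positivity of the support function at v and -v
  have hsingle : ∀ x : E 2, lpSurfMeasure p K {x} = f x * surfMeasure K {x} := by
    intro x
    rw [hμdef, withDensity_apply _ (measurableSet_singleton x), lintegral_singleton]
  have hsF : ∀ u : E 2, 0 ≤ suppFn K u := suppFn_nonneg hcomp h0
  have hposat : ∀ x : E 2, ‖x‖ = 1 → x ∈ msupport (lpSurfMeasure p K) →
      (∀ u ∈ Metric.ball x 1, 0 < suppFn K u → u ∉ S → u = x) → 0 < suppFn K x := by
    intro x hx hmem hball
    have hU := hmem (Metric.ball x 1) Metric.isOpen_ball (Metric.mem_ball_self one_pos)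
    have hcover : Metric.ball x 1 ⊆ S ∪ {u | suppFn K u = 0} ∪ {x} := by
      intro u hu
      rcases (hsF u).lt_or_eq with hpos | heq
      · by_cases huS : u ∈ S
        · exact Or.inl (Or.inl huS)
        · exact Or.inr (hball u hu hpos huS)
      · exact Or.inl (Or.inr heq.symm)
    have hle : lpSurfMeasure p K (Metric.ball x 1) ≤ lpSurfMeasure p K {x} := by
      calc lpSurfMeasure p K (Metric.ball x 1)
          ≤ lpSurfMeasure p K (S ∪ {u | suppFn K u = 0} ∪ {x}) := measure_mono hcover
        _ ≤ lpSurfMeasure p K (S ∪ {u | suppFn K u = 0}) + lpSurfMeasure p K {x} :=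
            measure_union_le _ _
        _ ≤ (lpSurfMeasure p K S + lpSurfMeasure p K {u | suppFn K u = 0}) +
              lpSurfMeasure p K {x} := add_le_add_left (measure_union_le _ _) _
        _ = lpSurfMeasure p K {x} := by rw [hμS, hZ]; simp
    have hxpos : 0 < lpSurfMeasure p K {x} := lt_of_lt_of_le hU hle
    by_contra hc
    push_neg at hc
    have hx0 : suppFn K x = 0 := le_antisymm hc (hsF x)
    have : f x = 0 := by
      have h1p : (1:ℝ) - p ≠ 0 := by intro h; linarith [hp.2, h]
      simp only [hfdef, hx0, Real.zero_rpow h1p]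
      simp
    rw [hsingle x, this, zero_mul] at hxpos
    exact lt_irrefl _ hxpos
  have hdistvv : dist v (-v) = 2 := by
    rw [dist_eq_norm, sub_neg_eq_add, ← two_smul ℝ v, norm_smul]
    simp [hv]
  have hb : 0 < suppFn K v := by
    apply hposat v hv hvmem
    intro u hu hpos huS
    simp only [hS, Set.mem_diff, Set.mem_setOf_eq, not_and, not_not] at huS
    rcases huS hpos with h | h
    · exact h
    · exfalso
      rw [Set.mem_singleton_iff] at h
      rw [h] at hu
      rw [Metric.mem_ball, dist_comm] at hu
      rw [hdistvv] at hu
      linarith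
  have ha : 0 < suppFn K (-v) := by
    have hnv : ‖-v‖ = 1 := by rwa [norm_neg]
    apply hposat (-v) hnv hvmem'
    intro u hu hpos huS
    simp only [hS, Set.mem_diff, Set.mem_setOf_eq, not_and, not_not] at huS
    rcases huS hpos with h | h
    · exfalso
      rw [h, Metric.mem_ball] at hu
      rw [hdistvv] at hu
      linarith
    · rwa [Set.mem_singleton_iff] at h
  -- an interior ball
  obtain ⟨z, hz⟩ := hint
  obtain ⟨r, hr0, hrball⟩ := Metric.isOpen_iff.1 isOpen_interior z hz
  have hball : Metric.ball z r ⊆ K := hrball.trans interior_subset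
  -- the bad set on the boundary and its projection
  set Bad : Set (E 2) := g ⁻¹' S ∩ frontier K with hBad
  have hBad0 : μH[(1:ℝ)] Bad = 0 := by
    rw [← Measure.restrict_apply' (isClosed_frontier.measurableSet), ← hρ]
    exact hρS
  set π : E 2 → ℝ := fun x => ⟪x, v⟫ with hπ
  have hπlip : LipschitzWith 1 π := by
    apply LipschitzWith.of_dist_le_mul
    intro x y
    rw [Real.dist_eq, hπ]
    have : ⟪x, v⟫ - ⟪y, v⟫ = ⟪x - y, v⟫ := (inner_sub_left _ _ _).symm
    rw [this]
    calc |⟪x - y, v⟫| ≤ ‖x - y‖ * ‖v‖ := abs_real_inner_le_norm _ _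
      _ = 1 * dist x y := by rw [hv, dist_eq_norm]; ring
  set Tbad : Set ℝ := π '' Bad with hTbad
  have hTbad0 : volume Tbad = 0 := by
    have h2 : μH[(1:ℝ)] (π '' Bad) ≤ (1:ℝ≥0) ^ (1:ℝ) * μH[(1:ℝ)] Bad :=
      hπlip.hausdorffMeasure_image_le zero_le_one Bad
    rw [hBad0, mul_zero] at h2
    have h3 : μH[(1:ℝ)] Tbad = 0 := le_antisymm h2 zero_le
    rw [← hausdorffMeasure_real]
    exact h3
  -- pick good levels
  have hpick : ∀ c d : ℝ, c < d → ∃ t ∈ Set.Ioo c d, t ∉ Tbad := by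
    intro c d hcd
    by_contra hcon
    push_neg at hcon
    have hsub : Set.Ioo c d ⊆ Tbad := fun t ht => hcon t ht
    have := measure_mono hsub (μ := volume)
    rw [hTbad0, Real.volume_Ioo] at this
    have := le_antisymm this zero_le
    rw [ENNReal.ofReal_eq_zero] at this
    linarith
  obtain ⟨tp, htp, htpbad⟩ := hpick 0 (suppFn K v) hb
  obtain ⟨tm, htm, htmbad⟩ := hpick (-(suppFn K (-v))) 0 (by linarith)
  -- the four boundary points
  obtain ⟨y, y', hyfr, hy'fr, hyv, hy'v, hyw⟩ :=
    level_points hconv hcomp hv hr0 hball (t := tp) (by linarith [htp.1]) htp.2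
  obtain ⟨m, m', hmfr, hm'fr, hmv, hm'v, hmw⟩ :=
    level_points hconv hcomp hv hr0 hball (t := tm) htm.1 (by linarith [htm.2])
  -- normals at boundary points avoiding Bad
  have key : ∀ x : E 2, x ∈ frontier K → ⟪x, v⟫ ∉ Tbad → ⟪x, v⟫ ≠ suppFn K v →
      ⟪x, v⟫ ≠ -(suppFn K (-v)) →
      ∃ u : E 2, ‖u‖ = 1 ∧ ⟪x, u⟫ = 0 ∧ ∀ q ∈ K, ⟪q, u⟫ ≤ 0 := by
    intro x hxfr hxTbad hxb hxa
    have hex := exists_outer_normal hconv hcomp.isClosed ⟨z, hz⟩ hxfr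
    have hspec := gaussMap_spec hex
    have hxK : x ∈ K := hfrK hxfr
    have hsupp_eq : suppFn K (g x) = ⟪x, g x⟫ := suppFn_of_normal hcomp hxK hspec
    have hgS : g x ∉ S := by
      intro hmem
      exact hxTbad ⟨x, ⟨hmem, hxfr⟩, rfl⟩
    simp only [hS, Set.mem_diff, Set.mem_setOf_eq, not_and, not_not] at hgS
    by_cases hpos : 0 < suppFn K (g x)
    · exfalso
      rcases hgS hpos with h | h
      · -- g x = v
        apply hxb
        rw [← h]
        exact hsupp_eq.symm
      · rw [Set.mem_singleton_iff] at h
        apply hxa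
        have : suppFn K (-v) = ⟪x, -v⟫ := by rw [← h]; exact hsupp_eq
        rw [inner_neg_right] at this
        linarith
    · push_neg at hpos
      have hzero : suppFn K (g x) = 0 := le_antisymm hpos (hsF _)
      refine ⟨g x, hspec.1, by rw [← hsupp_eq]; exact hzero, ?_⟩
      intro q hq
      have := hspec.2 q hq
      rw [← hsupp_eq, hzero] at this
      exact this
  obtain ⟨uy, huyn, huy0, huyK⟩ := key y hyfr (by rwa [hyv]) (by rw [hyv]; exact htp.2.ne)
    (by rw [hyv]; intro h; linarith [htp.1])
  obtain ⟨um, humn, hum0, humK⟩ := key m' hm'fr (by rwa [hm'v]) (by rw [hm'v]; intro h; linarith [htm.2])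
    (by rw [hm'v]; exact htm.1.ne')
  -- translate to coordinates in the (v, w) basis and conclude
  have hyK : y ∈ K := hfrK hyfr
  have hy'K : y' ∈ K := hfrK hy'fr
  have hmK : m ∈ K := hfrK hmfr
  have hm'K : m' ∈ K := hfrK hm'fr
  have hpar := parseval hv
  have huyn2 : ⟪uy, v⟫ ^ 2 + ⟪uy, wv v⟫ ^ 2 = 1 := by
    have h1 := hpar uy uy
    rw [real_inner_self_eq_norm_mul_norm, huyn] at h1
    nlinarith [h1]
  have humn2 : ⟪um, v⟫ ^ 2 + ⟪um, wv v⟫ ^ 2 = 1 := by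
    have h1 := hpar um um
    rw [real_inner_self_eq_norm_mul_norm, humn] at h1
    nlinarith [h1]
  refine alg tp tm ⟪y, wv v⟫ ⟪y', wv v⟫ ⟪m, wv v⟫ ⟪m', wv v⟫ htp.1 htm.2 hyw hmw
    ⟪uy, v⟫ ⟪uy, wv v⟫ ⟪um, v⟫ ⟪um, wv v⟫ ?_ huyn2 ?_ humn2 ?_ ?_ ?_ ?_ ?_
  · rw [← hyv]; rw [hpar y uy] at huy0; linarith [huy0]
  · rw [← hm'v]; rw [hpar m' um] at hum0; linarith [hum0]
  · have := huyK y' hy'K; rw [hpar y' uy] at this; rw [← hy'v]; linarith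
  · have := huyK m hmK; rw [hpar m uy] at this; rw [← hmv]; linarith
  · have := huyK m' hm'K; rw [hpar m' uy] at this; rw [← hm'v]; linarith
  · have := humK y hyK; rw [hpar y um] at this; rw [← hyv]; linarith
  · have := humK m hmK; rw [hpar m um] at this; rw [← hmv]; linarith


end
end
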